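/- arXiv:0905.1678 — 2 statements merged into one kernel-verified Lean document; each statement's English description precedes it below -/
import Mathlib

section
/- For every real number p ≥ 2, every natural number l, and complex numbers a_1, ..., a_l, there exists a constant C_l depending only on l (and p) such that | |∑_{j=1}^l a_j|^p − ∑_{j=1}^l |a_j|^p | ≤ C_l ∑_{j≠k} |a_j| |a_k|^{p−1}. -/
open Finset

private lemma mvt_aux (p x y : ℝ) (hp : 1 ≤ p) (hy : 0 ≤ y) (hxy : y ≤ x) :
    x ^ p - y ^ p ≤ p * x ^ (p - 1) * (x - y) := by
  rcases eq_or_lt_of_le (hy.trans hxy) with h | hx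
  · have hy0 : y = 0 := le_antisymm (hxy.trans h.symm.le) hy
    have hx0 : x = 0 := h.symm
    have hpne : p ≠ 0 := by linarith
    simp [hx0, hy0, Real.zero_rpow hpne]
  · have hbern : 1 + p * (y / x - 1) ≤ (1 + (y / x - 1)) ^ p :=
      one_add_mul_self_le_rpow_one_add (by
        have : 0 ≤ y / x := div_nonneg hy hx.le
        linarith) (by linarith)
    have h1 : (1 + (y / x - 1)) = y / x := by ring
    rw [h1, Real.div_rpow hy hx.le] at hbern
    have hxp : (0:ℝ) < x ^ p := Real.rpow_pos_of_pos hx p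
    have h2 : x ^ p * (1 + p * (y / x - 1)) ≤ x ^ p * (y ^ p / x ^ p) :=
      mul_le_mul_of_nonneg_left hbern hxp.le
    have h3 : x ^ p * (y ^ p / x ^ p) = y ^ p := by field_simp
    have h4 : x ^ p = x ^ (p - 1) * x := by
      rw [← Real.rpow_add_one hx.ne']
      ring_nf
    rw [h3] at h2
    rw [h4] at h2 ⊢
    have h5 : x ^ (p - 1) * x * (1 + p * (y / x - 1))
        = x ^ (p-1) * x + p * (x ^ (p-1) * y) - p * (x ^ (p-1) * x) := by
      field_simp
      ring
    rw [h5] at h2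
    nlinarith [h2]

private lemma mvt_abs (p x y : ℝ) (hp : 1 ≤ p) (hx : 0 ≤ x) (hy : 0 ≤ y) :
    |x ^ p - y ^ p| ≤ p * (max x y) ^ (p - 1) * |x - y| := by
  rcases le_total y x with h | h
  · rw [abs_of_nonneg (by linarith [Real.rpow_le_rpow hy h (by linarith : (0:ℝ) ≤ p)]),
      abs_of_nonneg (by linarith), max_eq_left h]
    exact mvt_aux p x y hp hy h
  · rw [abs_sub_comm, abs_sub_comm x y,
      abs_of_nonneg (by linarith [Real.rpow_le_rpow hx h (by linarith : (0:ℝ) ≤ p)]),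
      abs_of_nonneg (by linarith), max_eq_right h]
    exact mvt_aux p y x hp hx h

private lemma helper (p : ℝ) (hp : 2 ≤ p) (b c X : ℝ) (hb : 0 ≤ b) (hc : 0 ≤ c)
    (hcb : c ≤ b) (hX : 0 ≤ X) (h1 : |X - b| ≤ c) :
    |X ^ p - b ^ p - c ^ p| ≤
      (p * 2 ^ (p - 1) + 1) * (b * c ^ (p - 1) + b ^ (p - 1) * c) := by
  have hmax : max X b ≤ 2 * b := by
    rcases abs_le.mp h1 with ⟨ha, hb'⟩
    simp only [max_le_iff]
    constructor <;> linarith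
  have hq : (0:ℝ) ≤ p - 1 := by linarith
  have hA : |X ^ p - b ^ p| ≤ p * (2 * b) ^ (p - 1) * c := by
    calc |X ^ p - b ^ p| ≤ p * (max X b) ^ (p - 1) * |X - b| :=
          mvt_abs p X b (by linarith) hX hb
      _ ≤ p * (2 * b) ^ (p - 1) * c := by
          apply mul_le_mul _ h1 (abs_nonneg _) (by positivity)
          exact mul_le_mul_of_nonneg_left
            (Real.rpow_le_rpow (le_max_of_le_right hb) hmax hq) (by linarith)
  have h2b : (2 * b) ^ (p - 1) = 2 ^ (p - 1) * b ^ (p - 1) :=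
    Real.mul_rpow (by norm_num) hb
  have hcp : c ^ p ≤ b * c ^ (p - 1) := by
    have : c ^ p = c * c ^ (p - 1) := by
      rcases eq_or_lt_of_le hc with h | h
      · rw [← h, Real.zero_rpow (by linarith : p ≠ 0),
          Real.zero_rpow (by intro h'; rw [h'] at hq; linarith; )]
        · ring
      · rw [mul_comm c _, ← Real.rpow_add_one h.ne', sub_add_cancel]
    rw [this]
    exact mul_le_mul_of_nonneg_right hcb (Real.rpow_nonneg hc _)
  rw [h2b] at hA
  have hcp0 : 0 ≤ c ^ p := Real.rpow_nonneg hc _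
  have hb1 : 0 ≤ b ^ (p-1) := Real.rpow_nonneg hb _
  have hc1 : 0 ≤ c ^ (p-1) := Real.rpow_nonneg hc _
  have h2p : (0:ℝ) ≤ 2 ^ (p-1) := Real.rpow_nonneg (by norm_num) _
  rw [abs_le] at hA ⊢
  have hp0 : (0:ℝ) ≤ p := by linarith
  constructor
  · nlinarith [hA.1, hcp,
      mul_nonneg (mul_nonneg hp0 h2p) (mul_nonneg hb hc1),
      mul_nonneg hb1 hc]
  · nlinarith [hA.2, hcp0,
      mul_nonneg (mul_nonneg hp0 h2p) (mul_nonneg hb hc1),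
      mul_nonneg hb1 hc, mul_nonneg hb hc1]

private lemma key (p : ℝ) (hp : 2 ≤ p) (x y : ℂ) :
    |‖x + y‖ ^ p - ‖x‖ ^ p - ‖y‖ ^ p| ≤
      (p * 2 ^ (p - 1) + 1) * (‖x‖ * ‖y‖ ^ (p - 1) + ‖x‖ ^ (p - 1) * ‖y‖) := by
  rcases le_total ‖y‖ ‖x‖ with h | h
  · have h1 : |‖x + y‖ - ‖x‖| ≤ ‖y‖ := by
      have := abs_norm_sub_norm_le (x + y) x
      simpa using this
    exact helper p hp ‖x‖ ‖y‖ ‖x + y‖ (norm_nonneg _) (norm_nonneg _) h (norm_nonneg _) h1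
  · have h1 : |‖x + y‖ - ‖y‖| ≤ ‖x‖ := by
      have := abs_norm_sub_norm_le (x + y) y
      simpa using this
    have := helper p hp ‖y‖ ‖x‖ ‖x + y‖ (norm_nonneg _) (norm_nonneg _) h (norm_nonneg _) h1
    calc |‖x + y‖ ^ p - ‖x‖ ^ p - ‖y‖ ^ p|
        = |‖x + y‖ ^ p - ‖y‖ ^ p - ‖x‖ ^ p| := by ring_nf
      _ ≤ (p * 2 ^ (p - 1) + 1) * (‖y‖ * ‖x‖ ^ (p - 1) + ‖y‖ ^ (p - 1) * ‖x‖) := this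
      _ = (p * 2 ^ (p - 1) + 1) * (‖x‖ * ‖y‖ ^ (p - 1) + ‖x‖ ^ (p - 1) * ‖y‖) := by ring

private lemma sum_rpow_le (q : ℝ) (hq : 1 ≤ q) (l : ℕ) (b : ℕ → ℝ) (hb : ∀ j, 0 ≤ b j) :
    (∑ j ∈ Finset.range l, b j) ^ q ≤ (l : ℝ) ^ q * ∑ j ∈ Finset.range l, b j ^ q := by
  rcases Nat.eq_zero_or_pos l with rfl | hl
  · simp [Real.zero_rpow (by linarith : q ≠ 0)]
  · obtain ⟨j0, hj0mem, hj0⟩ := Finset.exists_max_image (Finset.range l) b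
      ⟨0, Finset.mem_range.mpr hl⟩
    have hT : (∑ j ∈ Finset.range l, b j) ≤ (l : ℝ) * b j0 := by
      calc (∑ j ∈ Finset.range l, b j) ≤ ∑ _j ∈ Finset.range l, b j0 :=
            Finset.sum_le_sum fun j hj => hj0 j hj
        _ = (l : ℝ) * b j0 := by simp [mul_comm]
    calc (∑ j ∈ Finset.range l, b j) ^ q ≤ ((l : ℝ) * b j0) ^ q :=
          Real.rpow_le_rpow (Finset.sum_nonneg fun j _ => hb j) hT (by linarith)
      _ = (l : ℝ) ^ q * (b j0) ^ q := Real.mul_rpow (Nat.cast_nonneg l) (hb j0)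
      _ ≤ (l : ℝ) ^ q * ∑ j ∈ Finset.range l, b j ^ q := by
          apply mul_le_mul_of_nonneg_left _ (Real.rpow_nonneg (Nat.cast_nonneg l) q)
          exact Finset.single_le_sum (fun j _ => Real.rpow_nonneg (hb j) q) hj0mem

/-- For every real `p ≥ 2` and every `l`, there is a constant `C` (depending only on
`l` and `p`) such that for all complex numbers `a 1, ..., a l`,
`| |∑ a_j|^p − ∑ |a_j|^p | ≤ C ∑_{j≠k} |a_j| |a_k|^{p−1}`. -/
theorem stmt0 (p : ℝ) (hp : 2 ≤ p) (l : ℕ) :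
    ∃ C : ℝ, ∀ a : ℕ → ℂ,
      |‖∑ j ∈ Finset.range l, a j‖ ^ p - ∑ j ∈ Finset.range l, ‖a j‖ ^ p| ≤
        C * ∑ q ∈ (Finset.range l ×ˢ Finset.range l).filter (fun q => q.1 ≠ q.2),
              ‖a q.1‖ * ‖a q.2‖ ^ (p - 1) := by
  induction l with
  | zero =>
    refine ⟨0, fun a => ?_⟩
    simp [Real.zero_rpow (by linarith : p ≠ 0)]
  | succ l ih =>
    obtain ⟨C, hC⟩ := ih
    set K : ℝ := p * 2 ^ (p - 1) + 1 with hKdef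
    have hK : 0 ≤ K := by
      have : (0:ℝ) ≤ 2 ^ (p-1) := Real.rpow_nonneg (by norm_num) _
      nlinarith
    refine ⟨|C| + K * (1 + (l : ℝ) ^ (p - 1)), fun a => ?_⟩
    set g : ℕ × ℕ → ℝ := fun q => ‖a q.1‖ * ‖a q.2‖ ^ (p - 1) with hgdef
    have hgnn : ∀ q, 0 ≤ g q := fun q =>
      mul_nonneg (norm_nonneg _) (Real.rpow_nonneg (norm_nonneg _) _)
    set T : Finset (ℕ × ℕ) :=
      (Finset.range (l+1) ×ˢ Finset.range (l+1)).filter (fun q => q.1 ≠ q.2) with hTdef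
    have hTnn : 0 ≤ ∑ q ∈ T, g q := Finset.sum_nonneg fun q _ => hgnn q
    set S : ℂ := ∑ j ∈ Finset.range l, a j with hSdef
    have hsum : ∑ j ∈ Finset.range (l+1), a j = S + a l := Finset.sum_range_succ a l
    have hbsum : ∑ j ∈ Finset.range (l+1), ‖a j‖ ^ p
        = (∑ j ∈ Finset.range l, ‖a j‖ ^ p) + ‖a l‖ ^ p :=
      Finset.sum_range_succ _ l
    -- previous cross sum is bounded by new one
    have hsub1 : (Finset.range l ×ˢ Finset.range l).filter (fun q => q.1 ≠ q.2) ⊆ T := by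
      apply Finset.filter_subset_filter
      apply Finset.product_subset_product <;>
        exact Finset.range_subset_range.mpr (Nat.le_succ l)
    have hprev : ∑ q ∈ (Finset.range l ×ˢ Finset.range l).filter (fun q => q.1 ≠ q.2), g q
        ≤ ∑ q ∈ T, g q :=
      Finset.sum_le_sum_of_subset_of_nonneg hsub1 fun q _ _ => hgnn q
    -- piece bounds
    have hkey := key p hp S (a l)
    -- bound ‖S‖ * ‖a l‖^(p-1)
    have ht1 : ‖S‖ * ‖a l‖ ^ (p - 1) ≤ ∑ q ∈ T, g q := by
      have hS : ‖S‖ ≤ ∑ j ∈ Finset.range l, ‖a j‖ := norm_sum_le _ _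
      have h1 : ‖S‖ * ‖a l‖ ^ (p - 1) ≤ ∑ j ∈ Finset.range l, ‖a j‖ * ‖a l‖ ^ (p - 1) := by
        rw [← Finset.sum_mul]
        exact mul_le_mul_of_nonneg_right hS (Real.rpow_nonneg (norm_nonneg _) _)
      have h2 : ∑ j ∈ Finset.range l, ‖a j‖ * ‖a l‖ ^ (p - 1)
          = ∑ q ∈ Finset.range l ×ˢ {l}, g q := by
        rw [Finset.sum_product]
        simp [hgdef]
      have h3 : Finset.range l ×ˢ ({l} : Finset ℕ) ⊆ T := by
        rintro ⟨i, j⟩ hq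
        simp only [Finset.mem_product, Finset.mem_range, Finset.mem_singleton] at hq
        simp only [hTdef, Finset.mem_filter, Finset.mem_product, Finset.mem_range]
        omega
      calc ‖S‖ * ‖a l‖ ^ (p - 1) ≤ ∑ j ∈ Finset.range l, ‖a j‖ * ‖a l‖ ^ (p - 1) := h1
        _ = ∑ q ∈ Finset.range l ×ˢ {l}, g q := h2
        _ ≤ ∑ q ∈ T, g q := Finset.sum_le_sum_of_subset_of_nonneg h3 fun q _ _ => hgnn q
    -- bound ‖S‖^(p-1) * ‖a l‖
    have ht2 : ‖S‖ ^ (p - 1) * ‖a l‖ ≤ (l : ℝ) ^ (p - 1) * ∑ q ∈ T, g q := by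
      have hS : ‖S‖ ≤ ∑ j ∈ Finset.range l, ‖a j‖ := norm_sum_le _ _
      have h0 : ‖S‖ ^ (p - 1) ≤ (∑ j ∈ Finset.range l, ‖a j‖) ^ (p - 1) :=
        Real.rpow_le_rpow (norm_nonneg _) hS (by linarith)
      have h1 := sum_rpow_le (p - 1) (by linarith) l (fun j => ‖a j‖)
        (fun j => norm_nonneg _)
      have h2 : ∑ j ∈ Finset.range l, ‖a l‖ * ‖a j‖ ^ (p - 1)
          = ∑ q ∈ ({l} : Finset ℕ) ×ˢ Finset.range l, g q := by
        rw [Finset.sum_product]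
        simp [hgdef]
      have h3 : ({l} : Finset ℕ) ×ˢ Finset.range l ⊆ T := by
        rintro ⟨i, j⟩ hq
        simp only [Finset.mem_product, Finset.mem_range, Finset.mem_singleton] at hq
        simp only [hTdef, Finset.mem_filter, Finset.mem_product, Finset.mem_range]
        omega
      have h4 : ∑ q ∈ ({l} : Finset ℕ) ×ˢ Finset.range l, g q ≤ ∑ q ∈ T, g q :=
        Finset.sum_le_sum_of_subset_of_nonneg h3 fun q _ _ => hgnn q
      have h5 : ‖S‖ ^ (p - 1) * ‖a l‖
          ≤ ((l : ℝ) ^ (p - 1) * ∑ j ∈ Finset.range l, ‖a j‖ ^ (p - 1)) * ‖a l‖ := by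
        apply mul_le_mul_of_nonneg_right (h0.trans h1) (norm_nonneg _)
      have h6 : ((l : ℝ) ^ (p - 1) * ∑ j ∈ Finset.range l, ‖a j‖ ^ (p - 1)) * ‖a l‖
          = (l : ℝ) ^ (p - 1) * ∑ j ∈ Finset.range l, ‖a l‖ * ‖a j‖ ^ (p - 1) := by
        rw [mul_assoc, Finset.sum_mul]
        congr 1
        exact Finset.sum_congr rfl fun j _ => mul_comm _ _
      calc ‖S‖ ^ (p - 1) * ‖a l‖
          ≤ ((l : ℝ) ^ (p - 1) * ∑ j ∈ Finset.range l, ‖a j‖ ^ (p - 1)) * ‖a l‖ := h5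
        _ = (l : ℝ) ^ (p - 1) * ∑ j ∈ Finset.range l, ‖a l‖ * ‖a j‖ ^ (p - 1) := h6
        _ = (l : ℝ) ^ (p - 1) * ∑ q ∈ ({l} : Finset ℕ) ×ˢ Finset.range l, g q := by rw [h2]
        _ ≤ (l : ℝ) ^ (p - 1) * ∑ q ∈ T, g q :=
            mul_le_mul_of_nonneg_left h4 (Real.rpow_nonneg (Nat.cast_nonneg l) _)
    -- previous induction bound, with |C|
    have hprevC : |‖S‖ ^ p - ∑ j ∈ Finset.range l, ‖a j‖ ^ p| ≤ |C| * ∑ q ∈ T, g q := by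
      calc |‖S‖ ^ p - ∑ j ∈ Finset.range l, ‖a j‖ ^ p|
          ≤ C * ∑ q ∈ (Finset.range l ×ˢ Finset.range l).filter (fun q => q.1 ≠ q.2), g q :=
            hC a
        _ ≤ |C| * ∑ q ∈ (Finset.range l ×ˢ Finset.range l).filter (fun q => q.1 ≠ q.2), g q :=
            mul_le_mul_of_nonneg_right (le_abs_self C)
              (Finset.sum_nonneg fun q _ => hgnn q)
        _ ≤ |C| * ∑ q ∈ T, g q := mul_le_mul_of_nonneg_left hprev (abs_nonneg C)
    -- combine
    rw [hsum, hbsum]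
    have hsplit : ‖S + a l‖ ^ p - ((∑ j ∈ Finset.range l, ‖a j‖ ^ p) + ‖a l‖ ^ p)
        = (‖S + a l‖ ^ p - ‖S‖ ^ p - ‖a l‖ ^ p)
          + (‖S‖ ^ p - ∑ j ∈ Finset.range l, ‖a j‖ ^ p) := by ring
    rw [hsplit]
    have hK2 : |‖S + a l‖ ^ p - ‖S‖ ^ p - ‖a l‖ ^ p|
        ≤ K * (1 + (l : ℝ) ^ (p - 1)) * ∑ q ∈ T, g q := by
      calc |‖S + a l‖ ^ p - ‖S‖ ^ p - ‖a l‖ ^ p|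
          ≤ K * (‖S‖ * ‖a l‖ ^ (p - 1) + ‖S‖ ^ (p - 1) * ‖a l‖) := hkey
        _ ≤ K * (∑ q ∈ T, g q + (l : ℝ) ^ (p - 1) * ∑ q ∈ T, g q) :=
            mul_le_mul_of_nonneg_left (add_le_add ht1 ht2) hK
        _ = K * (1 + (l : ℝ) ^ (p - 1)) * ∑ q ∈ T, g q := by ring
    calc |(‖S + a l‖ ^ p - ‖S‖ ^ p - ‖a l‖ ^ p)
          + (‖S‖ ^ p - ∑ j ∈ Finset.range l, ‖a j‖ ^ p)|
        ≤ |‖S + a l‖ ^ p - ‖S‖ ^ p - ‖a l‖ ^ p|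
          + |‖S‖ ^ p - ∑ j ∈ Finset.range l, ‖a j‖ ^ p| := abs_add_le _ _
      _ ≤ K * (1 + (l : ℝ) ^ (p - 1)) * ∑ q ∈ T, g q + |C| * ∑ q ∈ T, g q :=
          add_le_add hK2 hprevC
      _ = (|C| + K * (1 + (l : ℝ) ^ (p - 1))) * ∑ q ∈ T, g q := by ring
end

section
/- Let d ≥ 3, p = 2d/(d−2), ε > 0, and let V, W : ℝ × ℝ^d → ℂ be continuous compactly supported functions. Suppose (ε_n^1), (ε_n^2) ⊂ ℝ^+ are sequences with ε_n^2/ε_n^1 → ∞ as n → ∞. Define V_n(t,x) = (ε_n^1)^{−(d−2)/2} V((t−t_n^1)/ε_n^1, (x−x_n^1)/ε_n^1) and W_n(t,x) = (ε_n^2)^{−(d−2)/2} W((t−t_n^2)/ε_n^2, (x−x_n^2)/ε_n^2) for arbitrary sequences (t_n^1,x_n^1), (t_n^2,x_n^2) in ℝ × ℝ^d. Then ∫∫ |V_n| |W_n|^{(d+4)/(d−2)} dx dt → 0 as n → ∞. -/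
open MeasureTheory Filter Pointwise

/-- Scale-orthogonality case of the asymptotic decoupling: if `ε_n^2 / ε_n^1 → ∞`, then
for continuous compactly supported `V, W : ℝ × ℝ^d → ℂ`, the cross term
`∫∫ |V_n| |W_n|^{(d+4)/(d−2)} dx dt → 0`. -/
theorem stmt1 (d : ℕ) (hd : 3 ≤ d)
    (V W : ℝ × EuclideanSpace ℝ (Fin d) → ℂ)
    (hVc : Continuous V) (hVs : HasCompactSupport V)
    (hWc : Continuous W) (hWs : HasCompactSupport W)
    (ε1 ε2 : ℕ → ℝ) (hε1 : ∀ n, 0 < ε1 n) (hε2 : ∀ n, 0 < ε2 n)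
    (hdiv : Tendsto (fun n => ε2 n / ε1 n) atTop atTop)
    (t1 t2 : ℕ → ℝ) (x1 x2 : ℕ → EuclideanSpace ℝ (Fin d)) :
    Tendsto
      (fun n => ∫ p : ℝ × EuclideanSpace ℝ (Fin d),
        ‖(ε1 n ^ (-(((d : ℝ) - 2) / 2))) •
            V ((p.1 - t1 n) / ε1 n, (ε1 n)⁻¹ • (p.2 - x1 n))‖ *
        ‖(ε2 n ^ (-(((d : ℝ) - 2) / 2))) •
            W ((p.1 - t2 n) / ε2 n, (ε2 n)⁻¹ • (p.2 - x2 n))‖ ^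
          (((d : ℝ) + 4) / ((d : ℝ) - 2)))
      atTop (nhds 0) := by
  classical
  haveI hHaar : (volume : Measure (ℝ × EuclideanSpace ℝ (Fin d))).IsAddHaarMeasure :=
    inferInstanceAs (((volume : Measure ℝ).prod
      (volume : Measure (EuclideanSpace ℝ (Fin d)))).IsAddHaarMeasure)
  have hd3 : (3:ℝ) ≤ (d:ℝ) := by exact_mod_cast hd
  have hd2 : (0:ℝ) < (d:ℝ) - 2 := by linarith
  set a : ℝ := -(((d : ℝ) - 2) / 2) with ha
  set q : ℝ := ((d : ℝ) + 4) / ((d : ℝ) - 2) with hq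
  set c : ℝ := ((d : ℝ) + 4) / 2 with hc
  have hq0 : 0 < q := div_pos (by linarith) hd2
  have hc0 : 0 < c := by rw [hc]; positivity
  obtain ⟨M, hM⟩ := hVs.exists_bound_of_continuous hVc
  obtain ⟨N, hN⟩ := hWs.exists_bound_of_continuous hWc
  have hM0 : 0 ≤ M := le_trans (norm_nonneg _) (hM (0, 0))
  have hN0 : 0 ≤ N := le_trans (norm_nonneg _) (hN (0, 0))
  set S : Set (ℝ × EuclideanSpace ℝ (Fin d)) := tsupport V with hSdef
  have hSfin : volume S < ⊤ := hVs.measure_lt_top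
  set K : ℝ := (volume S).toReal * M * N ^ q with hK
  have hK0 : 0 ≤ K := by positivity
  have key : ∀ n, (∫ p : ℝ × EuclideanSpace ℝ (Fin d),
        ‖(ε1 n ^ a) • V ((p.1 - t1 n) / ε1 n, (ε1 n)⁻¹ • (p.2 - x1 n))‖ *
        ‖(ε2 n ^ a) • W ((p.1 - t2 n) / ε2 n, (ε2 n)⁻¹ • (p.2 - x2 n))‖ ^ q)
        ≤ K * (ε1 n / ε2 n) ^ c := by
    intro n
    have hε1p := hε1 n
    have hε2p := hε2 n
    set L : ℝ × EuclideanSpace ℝ (Fin d) → ℝ × EuclideanSpace ℝ (Fin d) :=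
      fun p => ((p.1 - t1 n) / ε1 n, (ε1 n)⁻¹ • (p.2 - x1 n)) with hL
    have hLc : Continuous L := by
      apply Continuous.prodMk
      · exact (continuous_fst.sub continuous_const).div_const _
      · exact ((continuous_snd.sub continuous_const : Continuous fun p : ℝ × EuclideanSpace ℝ (Fin d) => p.2 - x1 n)).const_smul (ε1 n)⁻¹
    set A : Set (ℝ × EuclideanSpace ℝ (Fin d)) := L ⁻¹' S with hA
    have hAclosed : IsClosed A := (isClosed_tsupport V).preimage hLc
    have hAm : MeasurableSet A := hAclosed.measurableSet
    -- A as a translate of a dilate of S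
    have hAeq : A = (t1 n, x1 n) +ᵥ (ε1 n • S) := by
      ext p
      rw [Set.mem_vadd_set_iff_neg_vadd_mem,
        Set.mem_smul_set_iff_inv_smul_mem₀ hε1p.ne']
      have h1 : -(t1 n, x1 n) +ᵥ p = (p.1 - t1 n, p.2 - x1 n) := by
        simp [Prod.ext_iff, sub_eq_neg_add]
      have hpt : L p = (ε1 n)⁻¹ • (-(t1 n, x1 n) +ᵥ p) := by
        rw [h1, Prod.smul_mk]
        simp [hL, div_eq_inv_mul]
      simp [hA, hpt]
    have hrank : Module.finrank ℝ (ℝ × EuclideanSpace ℝ (Fin d)) = d + 1 := by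
      simp [Module.finrank_prod, finrank_euclideanSpace_fin, add_comm]
    have hAvol : volume A = ENNReal.ofReal (ε1 n ^ (d + 1)) * volume S := by
      rw [hAeq, measure_vadd, Measure.addHaar_smul, hrank,
        abs_of_nonneg (by positivity)]
    have hAfin : volume A < ⊤ :=
      hAvol ▸ ENNReal.mul_lt_top ENNReal.ofReal_lt_top hSfin
    set C : ℝ := (ε1 n ^ a * M) * (ε2 n ^ a * N) ^ q with hCdef
    have hgint : Integrable (A.indicator fun _ => C) := by
      rw [integrable_indicator_iff hAm]
      exact integrableOn_const hAfin.ne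
    have hpt : ∀ p, ‖(ε1 n ^ a) • V ((p.1 - t1 n) / ε1 n, (ε1 n)⁻¹ • (p.2 - x1 n))‖ *
        ‖(ε2 n ^ a) • W ((p.1 - t2 n) / ε2 n, (ε2 n)⁻¹ • (p.2 - x2 n))‖ ^ q
        ≤ A.indicator (fun _ => C) p := by
      intro p
      by_cases hp : p ∈ A
      · rw [Set.indicator_of_mem hp]
        have h1 : ‖(ε1 n ^ a) • V ((p.1 - t1 n) / ε1 n, (ε1 n)⁻¹ • (p.2 - x1 n))‖
            ≤ ε1 n ^ a * M := by
          rw [norm_smul, Real.norm_eq_abs, abs_of_nonneg (Real.rpow_nonneg hε1p.le _)]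
          exact mul_le_mul_of_nonneg_left (hM _) (Real.rpow_nonneg hε1p.le _)
        have h2 : ‖(ε2 n ^ a) • W ((p.1 - t2 n) / ε2 n, (ε2 n)⁻¹ • (p.2 - x2 n))‖ ^ q
            ≤ (ε2 n ^ a * N) ^ q := by
          apply Real.rpow_le_rpow (norm_nonneg _) _ hq0.le
          rw [norm_smul, Real.norm_eq_abs, abs_of_nonneg (Real.rpow_nonneg hε2p.le _)]
          exact mul_le_mul_of_nonneg_left (hN _) (Real.rpow_nonneg hε2p.le _)
        exact mul_le_mul h1 h2 (Real.rpow_nonneg (norm_nonneg _) _) (by positivity)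
      · rw [Set.indicator_of_notMem hp]
        have hV0 : V ((p.1 - t1 n) / ε1 n, (ε1 n)⁻¹ • (p.2 - x1 n)) = 0 :=
          image_eq_zero_of_notMem_tsupport hp
        rw [hV0, smul_zero, norm_zero, zero_mul]
    have hint : (∫ p : ℝ × EuclideanSpace ℝ (Fin d),
        ‖(ε1 n ^ a) • V ((p.1 - t1 n) / ε1 n, (ε1 n)⁻¹ • (p.2 - x1 n))‖ *
        ‖(ε2 n ^ a) • W ((p.1 - t2 n) / ε2 n, (ε2 n)⁻¹ • (p.2 - x2 n))‖ ^ q)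
        ≤ (volume A).toReal * C := by
      calc _ ≤ ∫ p, A.indicator (fun _ => C) p :=
            integral_mono_of_nonneg (Filter.Eventually.of_forall fun p => by positivity)
              hgint (Filter.Eventually.of_forall hpt)
        _ = (volume A).toReal * C := by
            rw [integral_indicator_const _ hAm, smul_eq_mul, measureReal_def]
    refine hint.trans_eq ?_
    have hAvol' : (volume A).toReal = ε1 n ^ (d + 1) * (volume S).toReal := by
      rw [hAvol, ENNReal.toReal_mul, ENNReal.toReal_ofReal (by positivity)]
    have hexp1 : ε1 n ^ (d + 1) * ε1 n ^ a = ε1 n ^ c := by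
      rw [← Real.rpow_natCast (ε1 n) (d + 1), ← Real.rpow_add hε1p]
      congr 1
      rw [ha, hc]
      push_cast
      ring
    have hexp2 : (ε2 n ^ a) ^ q = (ε2 n ^ c)⁻¹ := by
      rw [← Real.rpow_mul hε2p.le, ← Real.rpow_neg hε2p.le]
      congr 1
      rw [ha, hq, hc]
      field_simp
    calc (volume A).toReal * C
        = (ε1 n ^ (d + 1) * ε1 n ^ a) * (volume S).toReal * M *
            ((ε2 n ^ a) ^ q * N ^ q) := by
          rw [hAvol', hCdef, Real.mul_rpow (Real.rpow_nonneg hε2p.le _) hN0]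
          ring
      _ = K * (ε1 n / ε2 n) ^ c := by
          rw [hexp1, hexp2, hK, Real.div_rpow hε1p.le hε2p.le, div_eq_mul_inv]
          ring
  have h0 : Tendsto (fun n => ε1 n / ε2 n) atTop (nhds 0) := by
    exact hdiv.inv_tendsto_atTop.congr fun n => by simp [inv_div]
  have hlim : Tendsto (fun n => K * (ε1 n / ε2 n) ^ c) atTop (nhds 0) := by
    have h1 := h0.rpow_const (p := c) (Or.inr hc0.le)
    rw [Real.zero_rpow hc0.ne'] at h1
    simpa using h1.const_mul K
  exact squeeze_zero (fun n => integral_nonneg fun p => by positivity) key hlim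
end
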